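/- Let μ be a probability distribution on [n], I ⊆ [n] an interval, and suppose d(μ|I, U_I) ≥ ε where ε ∈ (0,1]. Then the set B_1 = {i ∈ I : μ|I(i) < (1 + ε/3)/|I|} has cardinality at least ε|I|/2. -/

import Mathlib

/-- A set of indices in `Fin n` is an interval if it is of the form `Finset.Icc a b`. -/
def IsInterval {n : ℕ} (S : Finset (Fin n)) : Prop := ∃ a b : Fin n, S = Finset.Icc a b

/-- Bucketing lemma, part 1: if the conditional distribution `μ|I` on an interval `I` is at
ℓ1 distance at least `ε` from uniform, then the set
`B₁ = {i ∈ I : μ|I(i) < (1 + ε/3)/|I|}` has cardinality at least `ε|I|/2`. -/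
theorem stmt18 {n : ℕ} (μ : Fin n → ℝ) (hμ0 : ∀ i, 0 ≤ μ i) (hμ1 : ∑ i, μ i = 1)
    (I : Finset (Fin n)) (hI : IsInterval I) (hne : I.Nonempty)
    (hIw : 0 < ∑ i ∈ I, μ i)
    (ε : ℝ) (hε0 : 0 < ε) (hε1 : ε ≤ 1)
    (hfar : ε ≤ ∑ i ∈ I, |μ i / (∑ i' ∈ I, μ i') - 1 / (I.card : ℝ)|) :
    ε * (I.card : ℝ) / 2 ≤
      ((I.filter fun i => μ i / (∑ i' ∈ I, μ i') < (1 + ε / 3) / (I.card : ℝ)).card : ℝ) := by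
  set W := ∑ i' ∈ I, μ i' with hW
  set m := (I.card : ℝ) with hm
  have hm0 : 0 < m := by
    rw [hm]
    exact_mod_cast Finset.card_pos.mpr hne
  -- the centered values sum to 0
  have hsum : ∑ i ∈ I, (μ i / W - 1 / m) = 0 := by
    rw [Finset.sum_sub_distrib, ← Finset.sum_div, Finset.sum_const, nsmul_eq_mul]
    rw [div_self hIw.ne', ← hm]
    field_simp
    norm_num
  -- abs = value + 2 * negative part
  have habs : ∀ i ∈ I, |μ i / W - 1 / m| =
      (μ i / W - 1 / m) + 2 * max (1 / m - μ i / W) 0 := by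
    intro i _
    rcases le_total (μ i / W - 1 / m) 0 with h | h
    · rw [abs_of_nonpos h, max_eq_left (by linarith)]
      ring
    · rw [abs_of_nonneg h, max_eq_right (by linarith)]
      ring
  have hsum2 : ∑ i ∈ I, |μ i / W - 1 / m| = 2 * ∑ i ∈ I, max (1 / m - μ i / W) 0 := by
    rw [Finset.sum_congr rfl habs, Finset.sum_add_distrib, hsum, Finset.mul_sum]
    ring
  set B := I.filter fun i => μ i / W < (1 + ε / 3) / m with hB
  have key : ∑ i ∈ I, max (1 / m - μ i / W) 0 ≤ (B.card : ℝ) / m := by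
    have step : ∀ i ∈ I, max (1 / m - μ i / W) 0 ≤
        (if μ i / W < (1 + ε / 3) / m then 1 / m else 0) := by
      intro i _
      rcases lt_or_ge (μ i / W) (1 / m) with h | h
      · have hcond : μ i / W < (1 + ε / 3) / m :=
          h.trans_le ((div_le_div_iff_of_pos_right hm0).mpr (by linarith))
        rw [if_pos hcond]
        have hν : 0 ≤ μ i / W := div_nonneg (hμ0 i) hIw.le
        exact max_le (by linarith) (by positivity)
      · rw [max_eq_right (by linarith)]
        split <;> positivity
    calc ∑ i ∈ I, max (1 / m - μ i / W) 0
        ≤ ∑ i ∈ I, (if μ i / W < (1 + ε / 3) / m then 1 / m else 0) :=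
          Finset.sum_le_sum step
      _ = ∑ i ∈ B, (1 / m) := (Finset.sum_filter _ _).symm
      _ = (B.card : ℝ) / m := by rw [Finset.sum_const, nsmul_eq_mul]; ring
  have : ε ≤ 2 * ((B.card : ℝ) / m) := by
    calc ε ≤ ∑ i ∈ I, |μ i / W - 1 / m| := hfar
      _ = 2 * ∑ i ∈ I, max (1 / m - μ i / W) 0 := hsum2
      _ ≤ 2 * ((B.card : ℝ) / m) := by linarith [key]
  have hbc : (B.card : ℝ) / m * m = (B.card : ℝ) := div_mul_cancel₀ _ hm0.ne'
  nlinarith [mul_le_mul_of_nonneg_right this hm0.le]
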